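/- Let H ≤ S_d act transitively on {1,…,d}, n ≥ 2, and let G = (H^n) ⋊ S_n act on ℝ^{n×d} as the wreath product action. Then the dimension of the space of linear G-equivariant endomorphisms of ℝ^{n×d} equals E(H) + 1, which is strictly less than 2·E(H) (the corresponding dimension for the direct product S_n × H) whenever E(H) ≥ 2. -/

import Mathlib

/-- The submodule of linear endomorphisms of `α → ℝ` that are equivariant with respect to the
permutation action of a subgroup `G` of the symmetric group. -/
noncomputable def equivSubmodule {α : Type*} [Fintype α] [DecidableEq α]
    (G : Subgroup (Equiv.Perm α)) :
    Submodule ℝ ((α → ℝ) →ₗ[ℝ] (α → ℝ)) where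
  carrier := {L | ∀ g ∈ G, ∀ x : α → ℝ, (L fun i => x (g⁻¹ i)) = fun i => L x (g⁻¹ i)}
  add_mem' := by
    intro L M hL hM g hg x
    simp only [LinearMap.add_apply, hL g hg x, hM g hg x]
    rfl
  zero_mem' := by intro g hg x; simp; rfl
  smul_mem' := by
    intro c L hL g hg x
    simp only [LinearMap.smul_apply, hL g hg x]
    rfl

/-- The submodule of linear endomorphisms of `ℝ^{n×d}` equivariant to the wreath product
`G = Hⁿ ⋊ S_n` acting by `((h₁,…,h_n,σ)·X)_{ij} = X_{σ⁻¹(i), h_i⁻¹(j)}`. -/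
noncomputable def wreathSubmodule {n d : ℕ} (H : Subgroup (Equiv.Perm (Fin d))) :
    Submodule ℝ ((Fin n → Fin d → ℝ) →ₗ[ℝ] (Fin n → Fin d → ℝ)) where
  carrier := {L | ∀ (σ : Equiv.Perm (Fin n)) (h : Fin n → Equiv.Perm (Fin d)),
    (∀ i, h i ∈ H) → ∀ X : Fin n → Fin d → ℝ,
    (L fun i => fun j => X (σ⁻¹ i) ((h i)⁻¹ j)) = fun i => fun j => L X (σ⁻¹ i) ((h i)⁻¹ j)}
  add_mem' := by
    intro L M hL hM σ h hh X
    simp only [LinearMap.add_apply, hL σ h hh X, hM σ h hh X]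
    rfl
  zero_mem' := by intro σ h hh X; simp; rfl
  smul_mem' := by
    intro c L hL σ h hh X
    simp only [LinearMap.smul_apply, hL σ h hh X]
    rfl



/-- The candidate equivariant map built from a diagonal block `A` and off-diagonal scalar. -/
noncomputable def matMap (n d : ℕ) (A : (Fin d → ℝ) →ₗ[ℝ] (Fin d → ℝ)) (lam : ℝ) :
    (Fin n → Fin d → ℝ) →ₗ[ℝ] (Fin n → Fin d → ℝ) where
  toFun X := fun i j => A (X i) j + lam * ((∑ k, ∑ j', X k j') - ∑ j', X i j')
  map_add' X Y := by
    funext i j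
    simp only [Pi.add_apply, map_add, LinearMap.add_apply, Finset.sum_add_distrib]
    ring
  map_smul' c X := by
    funext i j
    simp only [Pi.smul_apply, map_smul, LinearMap.smul_apply, smul_eq_mul, RingHom.id_apply,
      ← Finset.mul_sum]
    ring

lemma matMap_mem {n d : ℕ} {H : Subgroup (Equiv.Perm (Fin d))}
    {A : (Fin d → ℝ) →ₗ[ℝ] (Fin d → ℝ)} (hA : A ∈ equivSubmodule H) (lam : ℝ) :
    matMap n d A lam ∈ wreathSubmodule H := by
  intro σ h hh X
  funext i j
  have h1 : (A fun j => X (σ⁻¹ i) ((h i)⁻¹ j)) = fun j => A (X (σ⁻¹ i)) ((h i)⁻¹ j) :=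
    hA (h i) (hh i) (X (σ⁻¹ i))
  have hT : (∑ k, ∑ j', X (σ⁻¹ k) ((h k)⁻¹ j')) = ∑ k, ∑ j', X k j' := by
    calc (∑ k, ∑ j', X (σ⁻¹ k) ((h k)⁻¹ j')) = ∑ k, ∑ j', X (σ⁻¹ k) j' :=
          Finset.sum_congr rfl fun k _ => Equiv.sum_comp (h k)⁻¹ (X (σ⁻¹ k))
      _ = ∑ k, ∑ j', X k j' := Equiv.sum_comp σ⁻¹ (fun k => ∑ j', X k j')
  have hr : (∑ j', X (σ⁻¹ i) ((h i)⁻¹ j')) = ∑ j', X (σ⁻¹ i) j' :=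
    Equiv.sum_comp (h i)⁻¹ (X (σ⁻¹ i))
  simp only [matMap, LinearMap.coe_mk, AddHom.coe_mk]
  simp only [h1, hT, hr]

/-- The combining map: `(A, lam) ↦ matMap A lam`. -/
noncomputable def phiMap (n d : ℕ) (H : Subgroup (Equiv.Perm (Fin d))) :
    ((equivSubmodule H) × ℝ) →ₗ[ℝ] ((Fin n → Fin d → ℝ) →ₗ[ℝ] (Fin n → Fin d → ℝ)) where
  toFun p := matMap n d p.1.1 p.2
  map_add' p q := LinearMap.ext fun X => by
    funext i j
    simp only [matMap, LinearMap.coe_mk, AddHom.coe_mk, Prod.fst_add, Prod.snd_add,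
      Submodule.coe_add, LinearMap.add_apply, Pi.add_apply]
    ring
  map_smul' c p := LinearMap.ext fun X => by
    funext i j
    simp only [matMap, LinearMap.coe_mk, AddHom.coe_mk, Prod.smul_fst, Prod.smul_snd,
      Submodule.coe_smul, LinearMap.smul_apply, RingHom.id_apply, Pi.smul_apply, smul_eq_mul]
    ring

section Surj

variable {n d : ℕ} {H : Subgroup (Equiv.Perm (Fin d))}
  {L : (Fin n → Fin d → ℝ) →ₗ[ℝ] (Fin n → Fin d → ℝ)}

/-- Evaluation of equivariance on elementary matrices. -/
lemma wreath_key (hL : L ∈ wreathSubmodule H) (σ : Equiv.Perm (Fin n))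
    (h : Fin n → Equiv.Perm (Fin d)) (hh : ∀ i, h i ∈ H) (k : Fin n) (j : Fin d)
    (i : Fin n) (j' : Fin d) :
    L (Pi.single (σ k) (Pi.single (h (σ k) j) (1:ℝ))) i j' =
      L (Pi.single k (Pi.single j (1:ℝ))) (σ⁻¹ i) ((h i)⁻¹ j') := by
  have hX : (fun i j' => (Pi.single k (Pi.single j (1:ℝ)) : Fin n → Fin d → ℝ)
        (σ⁻¹ i) ((h i)⁻¹ j')) =
      (Pi.single (σ k) (Pi.single (h (σ k) j) (1:ℝ)) : Fin n → Fin d → ℝ) := by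
    funext i j'
    by_cases hik : i = σ k
    · subst hik
      simp [Pi.single_apply, Equiv.Perm.inv_eq_iff_eq, Equiv.symm_apply_eq]
    · have h2 : σ⁻¹ i ≠ k := fun hc => hik (by simp [← hc])
      rw [Equiv.Perm.inv_def] at h2
      simp [Pi.single_eq_of_ne h2, Pi.single_eq_of_ne hik]
  have hE := hL σ h hh (Pi.single k (Pi.single j (1:ℝ)))
  rw [hX] at hE
  exact congrFun (congrFun hE i) j'


lemma wreath_surj {n d : ℕ} {H : Subgroup (Equiv.Perm (Fin d))}
    {L : (Fin n → Fin d → ℝ) →ₗ[ℝ] (Fin n → Fin d → ℝ)}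
    (hn : 2 ≤ n) (hd : 0 < d)
    (htrans : ∀ j k : Fin d, ∃ h ∈ H, h j = k)
    (hL : L ∈ wreathSubmodule H) :
    ∃ (A : (Fin d → ℝ) →ₗ[ℝ] (Fin d → ℝ)), A ∈ equivSubmodule H ∧ ∃ (lam : ℝ),
      matMap n d A lam = L := by
  classical
  set z : Fin n := ⟨0, by omega⟩ with hz
  set o : Fin n := ⟨1, by omega⟩ with ho
  have hzo : z ≠ o := by simp [hz, ho, Fin.ext_iff]
  set j₀ : Fin d := ⟨0, hd⟩ with hj₀
  set A₀ : (Fin d → ℝ) →ₗ[ℝ] (Fin d → ℝ) :=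
    (LinearMap.proj z).comp (L.comp (LinearMap.single ℝ (fun _ : Fin n => Fin d → ℝ) z))
    with hA₀
  have hA₀apply : ∀ x, A₀ x = L (Pi.single z x) z := fun x => rfl
  set lam : ℝ := L (Pi.single z (Pi.single j₀ 1)) o j₀ with hlam
  -- A₀ is H-equivariant
  have hA₀mem : A₀ ∈ equivSubmodule H := by
    intro g hg x
    have hX : (fun i j => (Pi.single z x : Fin n → Fin d → ℝ)
          (((1 : Equiv.Perm (Fin n)))⁻¹ i) (g⁻¹ j)) =
        (Pi.single z (fun j => x (g⁻¹ j)) : Fin n → Fin d → ℝ) := by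
      funext i j
      by_cases hi : i = z
      · subst hi; simp
      · simp [Pi.single_eq_of_ne hi]
    have hE := hL 1 (fun _ => g) (fun _ => hg) (Pi.single z x)
    rw [hX] at hE
    have := congrFun hE z
    simp only [hA₀apply]
    simpa using this
  -- diagonal values
  have hdiag : ∀ (i : Fin n) (j j' : Fin d),
      L (Pi.single i (Pi.single j (1:ℝ))) i j' = A₀ (Pi.single j 1) j' := by
    intro i j j'
    have hk := wreath_key hL (Equiv.swap z i) (fun _ => 1) (fun _ => one_mem H) z j i j'
    simpa [Equiv.swap_apply_left, Equiv.swap_inv, Equiv.swap_apply_right,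
      hA₀apply] using hk
  -- off-diagonal values are all `lam`
  have hoff : ∀ (i k : Fin n), i ≠ k → ∀ (j j' : Fin d),
      L (Pi.single k (Pi.single j (1:ℝ))) i j' = lam := by
    -- first: independence of j' at position (o, z)
    have hb : ∀ (j j' j'' : Fin d),
        L (Pi.single z (Pi.single j (1:ℝ))) o j' =
        L (Pi.single z (Pi.single j (1:ℝ))) o j'' := by
      intro j j' j''
      obtain ⟨g, hg, hgj⟩ := htrans j'' j'
      have hk := wreath_key hL 1 (fun m => if m = o then g else 1)
        (fun m => by split <;> [exact hg; exact one_mem H]) z j o j'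
      simp only [Equiv.Perm.one_apply, inv_one, if_neg hzo, if_pos rfl, if_true,
        eq_self_iff_true] at hk
      simp only [hzo, if_false, Equiv.Perm.one_apply] at hk
      rw [hk, ← hgj, Equiv.Perm.inv_def, Equiv.symm_apply_apply]
    -- second: independence of j at position (o, z)
    have hc : ∀ (j j' : Fin d),
        L (Pi.single z (Pi.single j (1:ℝ))) o j' =
        L (Pi.single z (Pi.single j₀ (1:ℝ))) o j' := by
      intro j j'
      obtain ⟨g, hg, hgj⟩ := htrans j₀ j
      have hk := wreath_key hL 1 (fun m => if m = z then g else 1)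
        (fun m => by split <;> [exact hg; exact one_mem H]) z j₀ o j'
      simp only [Equiv.Perm.one_apply, inv_one, if_pos rfl, if_true, eq_self_iff_true,
        if_neg (Ne.symm hzo)] at hk
      rw [hgj] at hk
      simpa using hk
    intro i k hik j j'
    -- build σ with σ z = k, σ o = i
    set τ := Equiv.swap z k with hτ
    set m := τ i with hm
    have hmz : m ≠ z := by
      intro hc2
      apply hik
      have : τ m = τ z := by rw [hc2]
      rw [hm, Equiv.swap_apply_self, Equiv.swap_apply_left] at this
      exact this
    set σ := τ * Equiv.swap o m with hσ
    have hσz : σ z = k := by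
      have h1 : (Equiv.swap o m) z = z := Equiv.swap_apply_of_ne_of_ne hzo (Ne.symm hmz)
      rw [hσ, Equiv.Perm.mul_apply, h1, hτ, Equiv.swap_apply_left]
    have hσo : σ o = i := by
      rw [hσ, Equiv.Perm.mul_apply, Equiv.swap_apply_left, hm, hτ, Equiv.swap_apply_self]
    have ha := wreath_key hL σ (fun _ => 1) (fun _ => one_mem H) z j i j'
    simp only [Equiv.Perm.one_apply, inv_one] at ha
    rw [hσz] at ha
    have hσinv : σ⁻¹ i = o := by rw [← hσo, Equiv.Perm.inv_def, Equiv.symm_apply_apply]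
    rw [hσinv] at ha
    rw [ha, hb j j' j₀, hc j j₀]
  -- reconstruction
  refine ⟨A₀, hA₀mem, lam, ?_⟩
  apply Module.Basis.ext (Pi.basis fun _ : Fin n => Pi.basisFun ℝ (Fin d))
  rintro ⟨k, j'⟩
  rw [Pi.basis_apply]
  simp only [Pi.basisFun_apply]
  funext i j
  simp only [matMap, LinearMap.coe_mk, AddHom.coe_mk]
  by_cases hik : i = k
  · subst hik
    have hT : (∑ m, ∑ j₂, (Pi.single i (Pi.single j' (1:ℝ)) : Fin n → Fin d → ℝ) m j₂) = 1 := by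
      rw [Finset.sum_eq_single i]
      · simp [Pi.single_apply]
      · intro m _ hm; simp [Pi.single_eq_of_ne hm]
      · simp
    have hr : (∑ j₂, (Pi.single i (Pi.single j' (1:ℝ)) : Fin n → Fin d → ℝ) i j₂) = 1 := by
      simp [Pi.single_apply]
    rw [hT, hr, Pi.single_eq_same]
    simp only [sub_self, mul_zero, add_zero]
    exact (hdiag i j' j).symm
  · have hzero : (Pi.single k (Pi.single j' (1:ℝ)) : Fin n → Fin d → ℝ) i = 0 :=
      Pi.single_eq_of_ne hik _
    have hT : (∑ m, ∑ j₂, (Pi.single k (Pi.single j' (1:ℝ)) : Fin n → Fin d → ℝ) m j₂) = 1 := by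
      rw [Finset.sum_eq_single k]
      · simp [Pi.single_apply]
      · intro m _ hm; simp [Pi.single_eq_of_ne hm]
      · simp
    have hr : (∑ j₂, (Pi.single k (Pi.single j' (1:ℝ)) : Fin n → Fin d → ℝ) i j₂) = 0 := by
      simp [hzero]
    rw [hT, hr, hzero]
    simp only [map_zero, LinearMap.zero_apply, Pi.zero_apply, sub_zero, mul_one, zero_add]
    exact (hoff i k hik j' j).symm

end Surj

/-- **Wreath-product equivariant maps are fewer than direct-product ones.** For transitive
`H ≤ S_d`, `n ≥ 2`, the space of linear endomorphisms of `ℝ^{n×d}` equivariant to the wreath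
product `Hⁿ ⋊ S_n` has dimension `E(H) + 1`; and whenever `E(H) ≥ 2` this is strictly smaller
than `2·E(H)`, the dimension for the direct product `S_n × H`. -/
theorem wreath_dim_lt_product_dim {n d : ℕ} (hn : 2 ≤ n) (hd : 0 < d)
    (H : Subgroup (Equiv.Perm (Fin d)))
    (htrans : ∀ j k : Fin d, ∃ h ∈ H, h j = k) :
    Module.finrank ℝ (wreathSubmodule (n := n) H) =
        Module.finrank ℝ (equivSubmodule H) + 1 ∧
      (2 ≤ Module.finrank ℝ (equivSubmodule H) →
        Module.finrank ℝ (wreathSubmodule (n := n) H) <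
          2 * Module.finrank ℝ (equivSubmodule H)) := by
  classical
  have hrange : wreathSubmodule (n := n) H = LinearMap.range (phiMap n d H) := by
    apply le_antisymm
    · intro L hL
      obtain ⟨A, hA, lam, hEq⟩ := wreath_surj hn hd htrans hL
      exact ⟨(⟨A, hA⟩, lam), hEq⟩
    · rintro L ⟨⟨A, lam⟩, rfl⟩
      exact matMap_mem A.2 lam
  have hker : ∀ p, phiMap n d H p = 0 → p = 0 := by
    rintro ⟨A, lam⟩ h0
    have h0' : matMap n d (A : (Fin d → ℝ) →ₗ[ℝ] (Fin d → ℝ)) lam = 0 := h0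
    set z : Fin n := ⟨0, by omega⟩ with hz
    set o : Fin n := ⟨1, by omega⟩ with ho
    have hoz : o ≠ z := by simp [hz, ho, Fin.ext_iff]
    set j₀ : Fin d := ⟨0, hd⟩ with hj₀
    have hTs : ∀ x : Fin d → ℝ,
        (∑ m, ∑ j₂, (Pi.single z x : Fin n → Fin d → ℝ) m j₂) = ∑ j₂, x j₂ := by
      intro x
      rw [Finset.sum_eq_single z]
      · simp
      · intro m _ hm; simp [Pi.single_eq_of_ne hm]
      · simp
    have hAz : (A : (Fin d → ℝ) →ₗ[ℝ] (Fin d → ℝ)) = 0 := by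
      apply LinearMap.ext
      intro x
      funext j
      have := congrFun (congrFun (LinearMap.congr_fun h0' (Pi.single z x)) z) j
      simp only [matMap, LinearMap.coe_mk, AddHom.coe_mk, LinearMap.zero_apply,
        Pi.zero_apply, Pi.single_eq_same, hTs x, sub_self, mul_zero, add_zero] at this
      simpa using this
    have hlam : lam = 0 := by
      have := congrFun (congrFun
        (LinearMap.congr_fun h0' (Pi.single z (Pi.single j₀ 1))) o) j₀
      simp only [matMap, LinearMap.coe_mk, AddHom.coe_mk, LinearMap.zero_apply,
        Pi.zero_apply, Pi.single_eq_of_ne hoz, hTs, map_zero] at this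
      simp only [Pi.single_apply, Finset.sum_ite_eq'] at this
      simpa using this
    have : ((A, lam) : (equivSubmodule H) × ℝ) = (0, 0) := by
      refine Prod.ext ?_ hlam
      exact Subtype.ext hAz
    simpa using this
  have hinj : Function.Injective (phiMap n d H) :=
    fun p q hpq => sub_eq_zero.mp (hker _ (by rw [map_sub, hpq, sub_self]))
  haveI : Module.Free ℝ (equivSubmodule H) :=
    Module.Free.of_divisionRing (K := ℝ) (V := equivSubmodule H)
  have e1 : Module.finrank ℝ (wreathSubmodule (n := n) H) =
      Module.finrank ℝ (equivSubmodule H) + 1 := by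
    rw [hrange, LinearMap.finrank_range_of_inj hinj,
      Module.finrank_prod, Module.finrank_self]
  exact ⟨e1, fun h2 => by omega⟩
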